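/- Update answer sets satisfy Cut (postulate N2): if every rule of Q belongs to Bel((P⃗, P_1)) and every rule of P_2 belongs to Bel((P⃗, P_1 ∪ Q)), then every rule of P_2 belongs to Bel((P⃗, P_1)). -/

import Mathlib

/-- A literal over atoms `α`: an atom or a strongly negated atom. -/
inductive Lit (α : Type) where
  | pos : α → Lit α
  | neg : α → Lit α

/-- The complementary literal. -/
def Lit.compl {α : Type} : Lit α → Lit α
  | .pos a => .neg a
  | .neg a => .pos a

/-- A rule of an extended logic program: optional head literal,
prerequisites `prem`, and weakly negated body literals `nbody`. -/
structure Rule (α : Type) where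
  head : Option (Lit α)
  prem : Set (Lit α)
  nbody : Set (Lit α)

/-- A set of literals is consistent iff it contains no complementary pair. -/
def Consistent {α : Type} (S : Set (Lit α)) : Prop :=
  ∀ a : α, ¬ (Lit.pos a ∈ S ∧ Lit.neg a ∈ S)

/-- The body of `r` is true in `S`. -/
def BodyTrue {α : Type} (S : Set (Lit α)) (r : Rule α) : Prop :=
  r.prem ⊆ S ∧ ∀ L ∈ r.nbody, L ∉ S

/-- The head of `r` is true in `S` (false for constraints). -/
def HeadTrue {α : Type} (S : Set (Lit α)) (r : Rule α) : Prop :=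
  ∃ L, r.head = some L ∧ L ∈ S

/-- Rule `r` is true in `S`. -/
def RuleTrue {α : Type} (S : Set (Lit α)) (r : Rule α) : Prop :=
  BodyTrue S r → HeadTrue S r

/-- `S` is a model of program `P`. -/
def IsModel {α : Type} (S : Set (Lit α)) (P : Set (Rule α)) : Prop :=
  ∀ r ∈ P, RuleTrue S r

/-- `r` is defeated by `S`. -/
def Defeated {α : Type} (S : Set (Lit α)) (r : Rule α) : Prop :=
  ∃ L ∈ r.nbody, L ∈ S

/-- The Gelfond–Lifschitz reduct of `P` relative to `S`. -/
def Reduct {α : Type} (P : Set (Rule α)) (S : Set (Lit α)) : Set (Rule α) :=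
  { r' | ∃ r ∈ P, ¬ Defeated S r ∧ r' = Rule.mk r.head r.prem ∅ }

/-- `S` is an answer set of `P`: a consistent set of literals that is a
minimal model of the reduct `P^S`. -/
def IsAnswerSet {α : Type} (P : Set (Rule α)) (S : Set (Lit α)) : Prop :=
  Consistent S ∧ IsModel S (Reduct P S) ∧
    ∀ T ⊆ S, IsModel T (Reduct P S) → T = S

/-- The belief set of `P`: all rules true in every answer set of `P`. -/
def Bel {α : Type} (P : Set (Rule α)) : Set (Rule α) :=
  { r | ∀ S, IsAnswerSet P S → RuleTrue S r }
/-- Extended alphabet `At*`: original atoms, indexed copies `A_i`,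
and rejection atoms `rej(r)` for (named copies of) rules. -/
inductive ExtAtom (α : Type) where
  | base : α → ExtAtom α
  | idx : ℕ → α → ExtAtom α
  | rej : ℕ → Rule α → ExtAtom α

/-- Lift a literal over `α` to the corresponding literal over `At*`. -/
def liftLit {α : Type} : Lit α → Lit (ExtAtom α)
  | .pos a => .pos (.base a)
  | .neg a => .neg (.base a)

/-- The indexed copy `L_i` of a literal `L`. -/
def idxLit {α : Type} (i : ℕ) : Lit α → Lit (ExtAtom α)
  | .pos a => .pos (.idx i a)
  | .neg a => .neg (.idx i a)

/-- Literal `L` occurs in the update sequence `(P 0, …, P (n-1))`. -/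
def OccursIn {α : Type} (n : ℕ) (P : ℕ → Set (Rule α)) (L : Lit α) : Prop :=
  ∃ i < n, ∃ r ∈ P i, r.head = some L ∨ L ∈ r.prem ∨ L ∈ r.nbody

/-- The update program `P_◁` of the update sequence `(P 0, …, P (n-1))`,
an ELP over the extended alphabet `At*`. -/
def UpdProgram {α : Type} (n : ℕ) (P : ℕ → Set (Rule α)) : Set (Rule (ExtAtom α)) :=
  -- (i) all constraints
  { r' | ∃ i < n, ∃ r ∈ P i, r.head = none ∧
      r' = Rule.mk none (liftLit '' r.prem) (liftLit '' r.nbody) } ∪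
  -- (ii)  L_i ← B(r), not rej(r)
  { r' | ∃ i < n, ∃ r ∈ P i, ∃ L, r.head = some L ∧
      r' = Rule.mk (some (idxLit i L)) (liftLit '' r.prem)
             ((liftLit '' r.nbody) ∪ {Lit.pos (ExtAtom.rej i r)}) } ∪
  -- (iii)  rej(r) ← B(r), ¬L_{i+1}
  { r' | ∃ i, i + 1 < n ∧ ∃ r ∈ P i, ∃ L, r.head = some L ∧
      r' = Rule.mk (some (Lit.pos (ExtAtom.rej i r)))
             ((liftLit '' r.prem) ∪ {idxLit (i+1) L.compl}) (liftLit '' r.nbody) } ∪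
  -- (iv) inertia rules  L_i ← L_{i+1}  and  L ← L_1
  { r' | ∃ L, OccursIn n P L ∧
      ((∃ i, i + 1 < n ∧ r' = Rule.mk (some (idxLit i L)) {idxLit (i+1) L} ∅) ∨
        r' = Rule.mk (some (liftLit L)) {idxLit 0 L} ∅) }

/-- `S` is an update answer set of the sequence `(P 0, …, P (n-1))`:
the restriction to `Lit_At` of an answer set of the update program. -/
def UpdateAnswerSet {α : Type} (n : ℕ) (P : ℕ → Set (Rule α)) (S : Set (Lit α)) : Prop :=
  ∃ S' : Set (Lit (ExtAtom α)), IsAnswerSet (UpdProgram n P) S' ∧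
    S = { L | liftLit L ∈ S' }

/-- Two rules are conflicting iff their heads are complementary literals. -/
def Conflicting {α : Type} (r r' : Rule α) : Prop :=
  ∃ L, r.head = some L ∧ r'.head = some L.compl

/-- The founded rejection set at level `i`: rules of `P i` rejected by a
conflicting, itself non-rejected rule of some later program. -/
def RejLevel {α : Type} (n : ℕ) (P : ℕ → Set (Rule α)) (S : Set (Lit α)) (i : ℕ) :
    Set (Rule α) :=
  { r | r ∈ P i ∧ ∃ j, ∃ _ : i < j, ∃ _ : j < n, ∃ r',
      r' ∈ P j ∧ r' ∉ RejLevel n P S j ∧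
      Conflicting r r' ∧ BodyTrue S r ∧ BodyTrue S r' }
  termination_by n - i
  decreasing_by omega

/-- The founded rejection set `Rej(S, P⃗)`. -/
def Rej {α : Type} (n : ℕ) (P : ℕ → Set (Rule α)) (S : Set (Lit α)) : Set (Rule α) :=
  { r | ∃ i < n, r ∈ RejLevel n P S i }

/-- The union `∪P⃗` of all rules of the sequence. -/
def UnionSeq {α : Type} (n : ℕ) (P : ℕ → Set (Rule α)) : Set (Rule α) :=
  { r | ∃ i < n, r ∈ P i }

/-- The belief set of an update sequence: all rules true in every update
answer set. -/
def BelSeq {α : Type} (n : ℕ) (P : ℕ → Set (Rule α)) : Set (Rule α) :=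
  { r | ∀ S, UpdateAnswerSet n P S → RuleTrue S r }

/-- Append one program to a sequence of length `n`. -/
def append1 {α : Type} (n : ℕ) (P : ℕ → Set (Rule α)) (Q : Set (Rule α)) :
    ℕ → Set (Rule α) :=
  fun i => if i < n then P i else Q


section Aux
variable {α : Type}

lemma lift_ne_idx (L : Lit α) (i : ℕ) (L' : Lit α) : liftLit L ≠ idxLit i L' := by
  cases L <;> cases L' <;> simp [liftLit, idxLit]

lemma idx_eq_idx {i j : ℕ} {L L' : Lit α} (h : idxLit i L = idxLit j L') : i = j ∧ L = L' := by
  cases L <;> cases L' <;> simp [idxLit] at h <;> simp [h]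

lemma idx_ne_rej (i : ℕ) (L : Lit α) (j : ℕ) (r : Rule α) :
    idxLit i L ≠ Lit.pos (ExtAtom.rej j r) := by
  cases L <;> simp [idxLit]

lemma lift_inj {L L' : Lit α} (h : liftLit L = liftLit L') : L = L' := by
  cases L <;> cases L' <;> simp [liftLit] at h <;> simp [h]

lemma lift_ne_rej (L : Lit α) (j : ℕ) (r : Rule α) :
    liftLit L ≠ Lit.pos (ExtAtom.rej j r) := by
  cases L <;> simp [liftLit]

/-- every literal of an answer set has a supporting rule -/
lemma support {β : Type} {P : Set (Rule β)} {S : Set (Lit β)} (h : IsAnswerSet P S)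
    {ℓ : Lit β} (hl : ℓ ∈ S) :
    ∃ r ∈ P, ¬ Defeated S r ∧ r.head = some ℓ := by
  obtain ⟨hcons, hmod, hmin⟩ := h
  by_contra hno
  push_neg at hno
  have hT : (S \ {ℓ}) = S := by
    apply hmin _ Set.diff_subset
    intro ρ hρ hbody
    obtain ⟨r, hr, hnd, rfl⟩ := hρ
    have hb' : BodyTrue S (Rule.mk r.head r.prem ∅) := by
      exact ⟨hbody.1.trans Set.diff_subset, by intro L hL; exact absurd hL (by simp)⟩
    obtain ⟨L', hL', hLmem⟩ := hmod _ ⟨r, hr, hnd, rfl⟩ hb'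
    refine ⟨L', hL', hLmem, ?_⟩
    intro hEq
    exact hno r hr hnd (by rw [hL', hEq])
  have : ℓ ∈ S \ {ℓ} := hT.symm ▸ hl
  simp at this

lemma nbody_shape {N : ℕ} {P : ℕ → Set (Rule α)} {r'' : Rule (ExtAtom α)}
    (h : r'' ∈ UpdProgram N P) {ℓ : Lit (ExtAtom α)} (hℓ : ℓ ∈ r''.nbody) :
    (∃ L, ℓ = liftLit L) ∨ (∃ i r, ℓ = Lit.pos (ExtAtom.rej i r)) := by
  simp only [UpdProgram, Set.mem_union, Set.mem_setOf_eq] at h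
  rcases h with (((⟨i,hi,r,hr,hh,rfl⟩)|(⟨i,hi,r,hr,L,hh,rfl⟩))|(⟨i,hi,r,hr,L,hh,rfl⟩))|(⟨L,hocc,(⟨i,hi,rfl⟩|rfl)⟩)
  · obtain ⟨L, _, rfl⟩ := hℓ; exact Or.inl ⟨L, rfl⟩
  · rcases hℓ with (⟨L', _, rfl⟩|h) 
    · exact Or.inl ⟨L', rfl⟩
    · simp at h; exact Or.inr ⟨i, r, h⟩
  · obtain ⟨L', _, rfl⟩ := hℓ; exact Or.inl ⟨L', rfl⟩
  · simp at hℓ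
  · simp at hℓ

lemma occursIn_mono {N : ℕ} {P P' : ℕ → Set (Rule α)} (h : ∀ i, P i ⊆ P' i) {L : Lit α}
    (ho : OccursIn N P L) : OccursIn N P' L := by
  obtain ⟨i, hi, r, hr, hx⟩ := ho
  exact ⟨i, hi, r, h i hr, hx⟩

lemma updProgram_mono {N : ℕ} {P P' : ℕ → Set (Rule α)} (h : ∀ i, P i ⊆ P' i) :
    UpdProgram N P ⊆ UpdProgram N P' := by
  intro r'' hr''
  simp only [UpdProgram, Set.mem_union, Set.mem_setOf_eq] at hr'' ⊢
  rcases hr'' with (((⟨i,hi,r,hr,rest⟩)|(⟨i,hi,r,hr,rest⟩))|(⟨i,hi,r,hr,rest⟩))|(⟨L,hocc,rest⟩)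
  · exact Or.inl (Or.inl (Or.inl ⟨i,hi,r,h i hr,rest⟩))
  · exact Or.inl (Or.inl (Or.inr ⟨i,hi,r,h i hr,rest⟩))
  · exact Or.inl (Or.inr ⟨i,hi,r,h i hr,rest⟩)
  · exact Or.inr ⟨L, occursIn_mono h hocc, rest⟩

lemma mem_upd_i {N i : ℕ} {P : ℕ → Set (Rule α)} {r : Rule α} (hi : i < N) (hr : r ∈ P i)
    (hh : r.head = none) :
    Rule.mk none (liftLit '' r.prem) (liftLit '' r.nbody) ∈ UpdProgram N P :=
  Or.inl (Or.inl (Or.inl ⟨i, hi, r, hr, hh, rfl⟩))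

lemma mem_upd_ii {N i : ℕ} {P : ℕ → Set (Rule α)} {r : Rule α} {L : Lit α}
    (hi : i < N) (hr : r ∈ P i) (hh : r.head = some L) :
    Rule.mk (some (idxLit i L)) (liftLit '' r.prem)
      ((liftLit '' r.nbody) ∪ {Lit.pos (ExtAtom.rej i r)}) ∈ UpdProgram N P :=
  Or.inl (Or.inl (Or.inr ⟨i, hi, r, hr, L, hh, rfl⟩))

lemma mem_upd_iii {N i : ℕ} {P : ℕ → Set (Rule α)} {r : Rule α} {L : Lit α}
    (hi : i + 1 < N) (hr : r ∈ P i) (hh : r.head = some L) :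
    Rule.mk (some (Lit.pos (ExtAtom.rej i r)))
      ((liftLit '' r.prem) ∪ {idxLit (i+1) L.compl}) (liftLit '' r.nbody) ∈ UpdProgram N P :=
  Or.inl (Or.inr ⟨i, hi, r, hr, L, hh, rfl⟩)

lemma mem_upd_iva {N i : ℕ} {P : ℕ → Set (Rule α)} {L : Lit α}
    (hocc : OccursIn N P L) (hi : i + 1 < N) :
    Rule.mk (some (idxLit i L)) {idxLit (i+1) L} ∅ ∈ UpdProgram N P :=
  Or.inr ⟨L, hocc, Or.inl ⟨i, hi, rfl⟩⟩

lemma mem_upd_ivb {N : ℕ} {P : ℕ → Set (Rule α)} {L : Lit α} (hocc : OccursIn N P L) :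
    Rule.mk (some (liftLit L)) {idxLit 0 L} ∅ ∈ UpdProgram N P :=
  Or.inr ⟨L, hocc, Or.inr rfl⟩

end Aux

/-- Cut, postulate N2: if `Q ⊆ Bel((P⃗, P_1))` and
`P_2 ⊆ Bel((P⃗, P_1 ∪ Q))`, then `P_2 ⊆ Bel((P⃗, P_1))`. -/
theorem cut_holds {α : Type} (n : ℕ) (Pseq : ℕ → Set (Rule α))
    (P1 Q P2 : Set (Rule α))
    (h1 : Q ⊆ BelSeq (n + 1) (append1 n Pseq P1))
    (h2 : P2 ⊆ BelSeq (n + 1) (append1 n Pseq (P1 ∪ Q))) :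
    P2 ⊆ BelSeq (n + 1) (append1 n Pseq P1) := by
  classical
  intro r₂ hr₂ S hUAS
  obtain ⟨S', hAS, hSeq⟩ := hUAS
  obtain ⟨hcons, hmod, hmin⟩ := hAS
  have hAS' : IsAnswerSet (UpdProgram (n+1) (append1 n Pseq P1)) S' := ⟨hcons, hmod, hmin⟩
  set PO := append1 n Pseq P1 with hPOdef
  set PN := append1 n Pseq (P1 ∪ Q) with hPNdef
  have hsub : ∀ i, PO i ⊆ PN i := by
    intro i r hr
    by_cases h : i < n
    · simpa [hPOdef, hPNdef, append1, h] using hr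
    · simp only [hPOdef, hPNdef, append1, if_neg h] at hr ⊢
      exact Or.inl hr
  have hUASold : UpdateAnswerSet (n+1) PO S := ⟨S', ⟨hcons, hmod, hmin⟩, hSeq⟩
  have hmemS : ∀ L : Lit α, L ∈ S ↔ liftLit L ∈ S' := by
    intro L; rw [hSeq]; rfl
  set H : Set (Lit α) := {L | ∃ r ∈ Q, r.head = some L ∧ BodyTrue S r} with hHdef
  set X : Set (Lit (ExtAtom α)) := {ℓ | ∃ i ≤ n, ∃ L ∈ H, ℓ = idxLit i L} with hXdef
  set S'' : Set (Lit (ExtAtom α)) := S' ∪ X with hSdd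
  -- members of H are in S
  have hHS : ∀ L ∈ H, liftLit L ∈ S' := by
    intro L hL
    obtain ⟨r, hrQ, hh, hb⟩ := hL
    have := h1 hrQ S hUASold hb
    obtain ⟨L', hL', hmem⟩ := this
    rw [hh] at hL'
    injection hL' with hL'
    rw [← hmemS]; rwa [hL']
  have hliftX : ∀ L : Lit α, liftLit L ∉ X := by
    intro L hL
    obtain ⟨i, _, L', _, hEq⟩ := hL
    exact lift_ne_idx L i L' hEq
  have hrejX : ∀ i (r : Rule α), Lit.pos (ExtAtom.rej i r) ∉ X := by
    intro i r hL
    obtain ⟨i', _, L', _, hEq⟩ := hL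
    exact idx_ne_rej i' L' i r hEq.symm
  have hliftS'' : ∀ L : Lit α, liftLit L ∈ S'' ↔ liftLit L ∈ S' := by
    intro L
    constructor
    · rintro (h | h)
      · exact h
      · exact absurd h (hliftX L)
    · exact Or.inl
  -- rej at level n never holds
  have hrejn : ∀ r : Rule α, Lit.pos (ExtAtom.rej n r) ∉ S' := by
    intro r hmem
    obtain ⟨r'', hr'', _, hh⟩ := support hAS' hmem
    simp only [UpdProgram, Set.mem_union, Set.mem_setOf_eq] at hr''
    rcases hr'' with (((⟨i,hi,r₀,hr₀,hh₀,rfl⟩)|(⟨i,hi,r₀,hr₀,L,hh₀,rfl⟩))|(⟨i,hi,r₀,hr₀,L,hh₀,rfl⟩))|(⟨L,hocc,(⟨i,hi,rfl⟩|rfl)⟩)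
    · simp at hh
    · simp only [Option.some.injEq] at hh
      exact idx_ne_rej i L n r hh
    · simp only [Option.some.injEq, Lit.pos.injEq, ExtAtom.rej.injEq] at hh
      omega
    · simp only [Option.some.injEq] at hh
      exact idx_ne_rej i L n r hh
    · simp only [Option.some.injEq] at hh
      exact lift_ne_rej L n r hh
  -- indexed literals in S' : bound and occurrence
  have hidxS' : ∀ (i : ℕ) (L : Lit α), idxLit i L ∈ S' → i ≤ n ∧ OccursIn (n+1) PO L := by
    intro i L hmem
    obtain ⟨r'', hr'', _, hh⟩ := support hAS' hmem
    simp only [UpdProgram, Set.mem_union, Set.mem_setOf_eq] at hr''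
    rcases hr'' with (((⟨i',hi',r₀,hr₀,hh₀,rfl⟩)|(⟨i',hi',r₀,hr₀,L',hh₀,rfl⟩))|(⟨i',hi',r₀,hr₀,L',hh₀,rfl⟩))|(⟨L',hocc,(⟨i',hi',rfl⟩|rfl)⟩)
    · simp at hh
    · simp only [Option.some.injEq] at hh
      obtain ⟨rfl, rfl⟩ := idx_eq_idx hh
      exact ⟨by omega, i', hi', r₀, hr₀, Or.inl hh₀⟩
    · simp only [Option.some.injEq] at hh
      exact absurd hh.symm (idx_ne_rej i L i' r₀)
    · simp only [Option.some.injEq] at hh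
      obtain ⟨rfl, rfl⟩ := idx_eq_idx hh
      exact ⟨by omega, hocc⟩
    · simp only [Option.some.injEq] at hh
      exact absurd hh (lift_ne_idx L' i L)
  -- downward inertia in S'
  have hstep : ∀ (j : ℕ) (L : Lit α), idxLit (j+1) L ∈ S' → idxLit j L ∈ S' := by
    intro j L hmem
    obtain ⟨hjn, hocc⟩ := hidxS' (j+1) L hmem
    have hprog := mem_upd_iva (i := j) hocc (by omega)
    have hnd : ¬ Defeated S' (Rule.mk (some (idxLit j L)) {idxLit (j+1) L} ∅) := by
      rintro ⟨ℓ, hℓ, -⟩; simp at hℓ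
    have := hmod _ ⟨_, hprog, hnd, rfl⟩ ⟨by simpa using hmem, by simp⟩
    obtain ⟨ℓ, hℓ, hmem'⟩ := this
    simp only [Option.some.injEq] at hℓ
    rwa [hℓ]
  have hlift0 : ∀ L : Lit α, idxLit 0 L ∈ S' → liftLit L ∈ S' := by
    intro L hmem
    obtain ⟨-, hocc⟩ := hidxS' 0 L hmem
    have hprog := mem_upd_ivb hocc
    have hnd : ¬ Defeated S' (Rule.mk (some (liftLit L)) {idxLit 0 L} ∅) := by
      rintro ⟨ℓ, hℓ, -⟩; simp at hℓ
    have := hmod _ ⟨_, hprog, hnd, rfl⟩ ⟨by simpa using hmem, by simp⟩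
    obtain ⟨ℓ, hℓ, hmem'⟩ := this
    simp only [Option.some.injEq] at hℓ
    rwa [hℓ]
  have hchain : ∀ (i : ℕ) (L : Lit α), idxLit i L ∈ S' → liftLit L ∈ S' := by
    intro i
    induction i with
    | zero => exact hlift0
    | succ j ih => exact fun L h => ih L (hstep j L h)
  have hcompl : ∀ L : Lit α, liftLit L ∈ S' → liftLit (Lit.compl L) ∈ S' → False := by
    intro L h1' h2'
    cases L with
    | pos a => exact hcons (ExtAtom.base a) ⟨h1', h2'⟩
    | neg a => exact hcons (ExtAtom.base a) ⟨h2', h1'⟩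
  -- defeat transfer
  have hndS' : ∀ r'' : Rule (ExtAtom α), ¬ Defeated S'' r'' → ¬ Defeated S' r'' := by
    rintro r'' hnd ⟨ℓ, hℓ, hmem⟩
    exact hnd ⟨ℓ, hℓ, Or.inl hmem⟩
  have hndS'' : ∀ (P' : ℕ → Set (Rule α)) (r'' : Rule (ExtAtom α)),
      r'' ∈ UpdProgram (n+1) P' → ¬ Defeated S' r'' → ¬ Defeated S'' r'' := by
    rintro P' r'' hprog hnd ⟨ℓ, hℓ, hmem⟩
    rcases hmem with hmem | hmem
    · exact hnd ⟨ℓ, hℓ, hmem⟩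
    · rcases nbody_shape hprog hℓ with ⟨L, rfl⟩ | ⟨i, r, rfl⟩
      · exact hliftX L hmem
      · exact hrejX i r hmem
  -- consistency of S''
  have hcons'' : Consistent S'' := by
    intro a ⟨hp, hn⟩
    have getBase : ∀ (b : Lit (ExtAtom α)), b ∈ S'' →
        ∀ L : Lit α, ∀ i : ℕ, b = idxLit i L → liftLit L ∈ S' := by
      rintro b hb L i rfl
      rcases hb with hb | hb
      · exact hchain i L hb
      · obtain ⟨i', _, L', hL', hEq⟩ := hb
        obtain ⟨-, rfl⟩ := idx_eq_idx hEq
        exact hHS _ hL'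
    cases a with
    | base b =>
      have hp' : (Lit.pos b : Lit α) ∈ S := by
        rw [hmemS]
        rcases hp with h | h
        · exact h
        · exact absurd h (hliftX (Lit.pos b))
      have hn' : (Lit.neg b : Lit α) ∈ S := by
        rw [hmemS]
        rcases hn with h | h
        · exact h
        · exact absurd h (hliftX (Lit.neg b))
      rw [hmemS] at hp' hn'
      exact hcons (ExtAtom.base b) ⟨hp', hn'⟩
    | idx i b =>
      have hp' := getBase _ hp (Lit.pos b) i (by simp [idxLit])
      have hn' := getBase _ hn (Lit.neg b) i (by simp [idxLit])
      exact hcons (ExtAtom.base b) ⟨hp', hn'⟩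
    | rej i r =>
      have hp' : Lit.pos (ExtAtom.rej i r) ∈ S' := by
        rcases hp with h | h
        · exact h
        · exact absurd h (hrejX i r)
      have hn' : Lit.neg (ExtAtom.rej i r) ∈ S' := by
        rcases hn with h | h
        · exact h
        · obtain ⟨i', _, L', _, hEq⟩ := h
          cases L' <;> simp [idxLit] at hEq
      exact hcons (ExtAtom.rej i r) ⟨hp', hn'⟩
  -- model of the new reduct
  have hmod'' : IsModel S'' (Reduct (UpdProgram (n+1) PN) S'') := by
    rintro ρ ⟨r'', hr'', hnd'', rfl⟩ hbody
    have hprem := hbody.1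
    simp only [UpdProgram, Set.mem_union, Set.mem_setOf_eq] at hr''
    rcases hr'' with (((⟨i,hi,r,hr,hh,rfl⟩)|(⟨i,hi,r,hr,L,hh,rfl⟩))|(⟨i,hi,r,hr,L,hh,rfl⟩))|(⟨L,hocc,(⟨i,hi,rfl⟩|rfl)⟩)
    · -- case (i): constraints
      exfalso
      have hpremS : r.prem ⊆ S := by
        intro L hL
        rw [hmemS, ← hliftS'' L]
        exact hprem ⟨L, hL, rfl⟩
      have hnbS : ∀ L ∈ r.nbody, L ∉ S := by
        intro L hL hLS
        exact hnd'' ⟨liftLit L, ⟨L, hL, rfl⟩, Or.inl ((hmemS L).mp hLS)⟩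
      by_cases hro : r ∈ PO i
      · have hprog := mem_upd_i (N := n+1) hi hro hh
        have hnd' : ¬ Defeated S' (Rule.mk none (liftLit '' r.prem) (liftLit '' r.nbody)) := by
          rintro ⟨ℓ, hℓ, hmem⟩
          exact hnd'' ⟨ℓ, hℓ, Or.inl hmem⟩
        have := hmod _ ⟨_, hprog, hnd', rfl⟩
          ⟨by rintro ℓ ⟨L, hL, rfl⟩; exact (hliftS'' L).mp (hprem ⟨L, hL, rfl⟩), by simp⟩
        obtain ⟨L', hL', -⟩ := this
        simp at hL'
      · have hrQ : r ∈ Q := by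
          simp only [hPOdef, append1] at hro
          simp only [hPNdef, append1] at hr
          by_cases hi' : i < n
          · rw [if_pos hi'] at hr hro; exact absurd hr hro
          · rw [if_neg hi'] at hr hro
            rcases hr with h | h
            · exact absurd h hro
            · exact h
        obtain ⟨L', hL', -⟩ := h1 hrQ S hUASold ⟨hpremS, hnbS⟩
        rw [hh] at hL'; simp at hL'
    · -- case (ii)
      have hpremS' : liftLit '' r.prem ⊆ S' := by
        rintro ℓ ⟨L', hL', rfl⟩
        exact (hliftS'' L').mp (hprem ⟨L', hL', rfl⟩)
      by_cases hro : r ∈ PO i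
      · have hprog := mem_upd_ii (N := n+1) hi hro hh
        have hnd' := hndS' _ hnd''
        have := hmod _ ⟨_, hprog, hnd', rfl⟩ ⟨hpremS', by simp⟩
        obtain ⟨ℓ, hℓ, hmem⟩ := this
        exact ⟨ℓ, hℓ, Or.inl hmem⟩
      · have hrQ : r ∈ Q := by
          simp only [hPOdef, append1] at hro
          simp only [hPNdef, append1] at hr
          by_cases hi' : i < n
          · rw [if_pos hi'] at hr hro; exact absurd hr hro
          · rw [if_neg hi'] at hr hro
            rcases hr with h | h
            · exact absurd h hro
            · exact h
        have hin : i = n := by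
          by_cases hi' : i < n
          · exfalso
            simp only [hPOdef, append1, if_pos hi'] at hro
            simp only [hPNdef, append1, if_pos hi'] at hr
            exact hro hr
          · omega
        have hLH : L ∈ H := by
          refine ⟨r, hrQ, hh, ?_, ?_⟩
          · intro L' hL'
            rw [hmemS, ← hliftS'' L']
            exact hprem ⟨L', hL', rfl⟩
          · intro L' hL' hLS
            exact hnd'' ⟨liftLit L', Or.inl ⟨L', hL', rfl⟩, Or.inl ((hmemS L').mp hLS)⟩
        exact ⟨idxLit i L, rfl, Or.inr ⟨i, by omega, L, hLH, rfl⟩⟩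
    · -- case (iii)
      have hiltn : i < n := by omega
      have hro : r ∈ PO i := by
        simp only [hPOdef, append1, if_pos hiltn]
        simp only [hPNdef, append1, if_pos hiltn] at hr
        exact hr
      have hpremS' : liftLit '' r.prem ⊆ S' := by
        rintro ℓ ⟨L', hL', rfl⟩
        exact (hliftS'' L').mp (hprem (Or.inl ⟨L', hL', rfl⟩))
      have hidxmem : idxLit (i+1) L.compl ∈ S'' := hprem (Or.inr rfl)
      rcases hidxmem with hS'm | hXm
      · have hprog := mem_upd_iii (N := n+1) hi hro hh
        have hnd' := hndS' _ hnd''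
        have := hmod _ ⟨_, hprog, hnd', rfl⟩
          ⟨by rintro ℓ (hℓ | hℓ); exacts [hpremS' hℓ, by simp at hℓ; rw [hℓ]; exact hS'm], by simp⟩
        obtain ⟨ℓ, hℓ, hmem⟩ := this
        exact ⟨ℓ, hℓ, Or.inl hmem⟩
      · obtain ⟨i', _, L', hL'H, hEq⟩ := hXm
        obtain ⟨-, rfl⟩ := idx_eq_idx hEq
        have hLcS' : liftLit L.compl ∈ S' := hHS _ hL'H
        by_cases hrej : Lit.pos (ExtAtom.rej i r) ∈ S'
        · exact ⟨_, rfl, Or.inl hrej⟩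
        · exfalso
          have hprog := mem_upd_ii (N := n+1) (by omega : i < n+1) hro hh
          have hnd' : ¬ Defeated S'
              (Rule.mk (some (idxLit i L)) (liftLit '' r.prem)
                ((liftLit '' r.nbody) ∪ {Lit.pos (ExtAtom.rej i r)})) := by
            rintro ⟨ℓ, hℓ, hmem⟩
            rcases hℓ with hℓ | hℓ
            · exact hnd'' ⟨ℓ, hℓ, Or.inl hmem⟩
            · simp at hℓ; rw [hℓ] at hmem; exact hrej hmem
          have := hmod _ ⟨_, hprog, hnd', rfl⟩ ⟨hpremS', by simp⟩
          obtain ⟨ℓ, hℓ, hmem⟩ := this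
          simp only [Option.some.injEq] at hℓ
          rw [← hℓ] at hmem
          exact hcompl L (hchain i L hmem) hLcS'
    · -- case (iv a): inertia
      have hidxmem : idxLit (i+1) L ∈ S'' := hprem rfl
      rcases hidxmem with hS'm | hXm
      · exact ⟨idxLit i L, rfl, Or.inl (hstep i L hS'm)⟩
      · obtain ⟨i', _, L', hL'H, hEq⟩ := hXm
        obtain ⟨-, rfl⟩ := idx_eq_idx hEq
        exact ⟨idxLit i L, rfl, Or.inr ⟨i, by omega, L, hL'H, rfl⟩⟩
    · -- case (iv b): inertia to base
      have hidxmem : idxLit 0 L ∈ S'' := hprem rfl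
      rcases hidxmem with hS'm | hXm
      · exact ⟨liftLit L, rfl, Or.inl (hchain 0 L hS'm)⟩
      · obtain ⟨i', _, L', hL'H, hEq⟩ := hXm
        obtain ⟨-, rfl⟩ := idx_eq_idx hEq
        exact ⟨liftLit L, rfl, Or.inl (hHS _ hL'H)⟩
  -- minimality
  have hmin'' : ∀ T ⊆ S'', IsModel T (Reduct (UpdProgram (n+1) PN) S'') → T = S'' := by
    intro T hT hTmod
    have hS'T : S' ⊆ T := by
      have heq : T ∩ S' = S' := by
        apply hmin _ Set.inter_subset_right
        rintro ρ ⟨r'', hr'', hnd', rfl⟩ hb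
        have hmemNew : (Rule.mk r''.head r''.prem ∅) ∈ Reduct (UpdProgram (n+1) PN) S'' :=
          ⟨r'', updProgram_mono hsub hr'', hndS'' PO r'' hr'' hnd', rfl⟩
        have hbT : BodyTrue T (Rule.mk r''.head r''.prem ∅) :=
          ⟨hb.1.trans Set.inter_subset_left, by simp [BodyTrue]⟩
        obtain ⟨ℓ, hℓ, hℓT⟩ := hTmod _ hmemNew hbT
        have hbS' : BodyTrue S' (Rule.mk r''.head r''.prem ∅) :=
          ⟨hb.1.trans Set.inter_subset_right, by simp [BodyTrue]⟩
        obtain ⟨ℓ₂, hℓ₂, hℓS'⟩ := hmod _ ⟨r'', hr'', hnd', rfl⟩ hbS'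
        rw [hℓ] at hℓ₂
        injection hℓ₂ with hℓ₂
        exact ⟨ℓ, hℓ, hℓT, hℓ₂ ▸ hℓS'⟩
      intro x hx
      rw [← heq] at hx
      exact hx.1
    have hidxT : ∀ L ∈ H, ∀ j ≤ n, idxLit j L ∈ T := by
      intro L hLH
      obtain ⟨r, hrQ, hh, hbS⟩ := hLH
      have hrPNn : r ∈ PN n := by
        simp only [hPNdef, append1]; simp [hrQ]
      have hoccN : OccursIn (n+1) PN L := ⟨n, by omega, r, hrPNn, Or.inl hh⟩
      have htop : idxLit n L ∈ T := by
        have hprog := mem_upd_ii (N := n+1) (by omega : n < n+1) hrPNn hh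
        have hnd' : ¬ Defeated S''
            (Rule.mk (some (idxLit n L)) (liftLit '' r.prem)
              ((liftLit '' r.nbody) ∪ {Lit.pos (ExtAtom.rej n r)})) := by
          rintro ⟨ℓ, hℓ, hmem⟩
          rcases hℓ with ⟨L', hL', rfl⟩ | hℓ
          · rcases hmem with hmem | hmem
            · exact hbS.2 L' hL' ((hmemS L').mpr hmem)
            · exact hliftX L' hmem
          · simp at hℓ
            rw [hℓ] at hmem
            rcases hmem with hmem | hmem
            · exact hrejn r hmem
            · exact hrejX n r hmem
        have hbT : BodyTrue T (Rule.mk (some (idxLit n L)) (liftLit '' r.prem) ∅) := by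
          refine ⟨?_, by simp⟩
          rintro ℓ ⟨L', hL', rfl⟩
          exact hS'T ((hmemS L').mp (hbS.1 hL'))
        obtain ⟨ℓ, hℓ, hℓT⟩ := hTmod _ ⟨_, hprog, hnd', rfl⟩ hbT
        simp only [Option.some.injEq] at hℓ
        rwa [hℓ]
      have hstepT : ∀ j, j + 1 ≤ n → idxLit (j+1) L ∈ T → idxLit j L ∈ T := by
        intro j hj hmem
        have hprog := mem_upd_iva (i := j) hoccN (by omega)
        have hnd' : ¬ Defeated S'' (Rule.mk (some (idxLit j L)) {idxLit (j+1) L} ∅) := by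
          rintro ⟨ℓ, hℓ, -⟩; simp at hℓ
        have := hTmod _ ⟨_, hprog, hnd', rfl⟩ ⟨by simpa using hmem, by simp⟩
        obtain ⟨ℓ, hℓ, hℓT⟩ := this
        simp only [Option.some.injEq] at hℓ
        rwa [hℓ]
      have hall : ∀ d, idxLit (n - d) L ∈ T := by
        intro d
        induction d with
        | zero => simpa using htop
        | succ d ih =>
          by_cases hd : n ≤ d
          · have : n - (d+1) = n - d := by omega
            rwa [this]
          · have h1'' : n - d = (n - (d+1)) + 1 := by omega
            rw [h1''] at ih
            exact hstepT _ (by omega) ih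
      intro j hj
      have := hall (n - j)
      have hnj : n - (n - j) = j := by omega
      rwa [hnj] at this
    have hXT : X ⊆ T := by
      rintro ℓ ⟨i, hi, L, hLH, rfl⟩
      exact hidxT L hLH i hi
    apply Set.Subset.antisymm hT
    rintro x (hx | hx)
    · exact hS'T hx
    · exact hXT hx
  have hSrestr : S = {L | liftLit L ∈ S''} := by
    ext L
    simp only [Set.mem_setOf_eq]
    rw [hmemS L, hliftS'' L]
  exact h2 hr₂ S ⟨S'', ⟨hcons'', hmod'', hmin''⟩, hSrestr⟩
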